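/- Fix p ∈ [1, ∞) and let α ≥ 1 satisfy α > (1/2) · 4^{1/p} / ( 2·4^{1/p} − (2 + 2^p)^{1/p} ). Let Γ be the 8-cycle with vertexes b₁, b₂, b₃, b₄, t₄, t₃, t₂, t₁ in cyclic order, all of vertex weight 1, and edge weights g(b₁b₂) = 4α, g(b₂b₃) = 10α, g(b₃b₄) = 4α, g(b₄t₄) = 1, g(t₄t₃) = 2, g(t₃t₂) = 10α, g(t₂t₁) = 2, g(t₁b₁) = 1. Let I be the 4-partition whose cut set consists of the two edges of weight 1, one edge of weight 2 and one edge of weight 4α (so that I is a 2-refining of the 2-partition {{b₁,b₂,b₃,b₄},{t₁,t₂,t₃,t₄}}, with cut energy 4 + 4α and p-deviation energy 4^{1/p}). Then for every λ ∈ [0,1], I is not a minimal 4-partition of F_{λ,p}: either the 4-partition D = {{t₁,b₁},{b₂,b₃},{b₄,t₄},{t₂,t₃}} (cut energy 4 + 8α, p-deviation 0) or the 4-partition C = {{t₁},{b₁,b₂,b₃,b₄},{t₄},{t₂,t₃}} (cut energy 6, p-deviation (2 + 2^p)^{1/p}) has strictly smaller F_{λ,p}-energy. -/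
import Mathlib


open Finset

namespace Districting

variable {V : Type*} [Fintype V] [DecidableEq V]

/-- An `N`-partition of a graph `G`: a family of `N` pairwise disjoint sets of
vertexes covering all of `V`, each inducing a connected subgraph of `G`. -/
structure Partition (G : SimpleGraph V) (N : ℕ) where
  part : Fin N → Finset V
  disj : ∀ k l, k ≠ l → Disjoint (part k) (part l)
  covers : ∀ v : V, ∃ k, v ∈ part k
  connected : ∀ k, (G.induce (part k : Set V)).Connected

/-- The mass of a set of vertexes w.r.t. the vertex weight `f`. -/
def mass (f : V → ℝ) (s : Finset V) : ℝ := ∑ v ∈ s, f v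

/-- The total mass of the graph w.r.t. the vertex weight `f`. -/
def totalMass (f : V → ℝ) : ℝ := ∑ v : V, f v

open Classical in
/-- The cut (perimeter) energy of a partition: the sum of the weights of edges
whose endpoints lie in different parts. -/
noncomputable def cutEnergy (G : SimpleGraph V) (g : Sym2 V → ℝ) {N : ℕ}
    (P : Partition G N) : ℝ :=
  ∑ e : Sym2 V,
    if e ∈ G.edgeSet ∧ ∀ k, ¬ (∀ v ∈ e, v ∈ P.part k) then g e else 0

/-- The deviation energy of a partition: the standard deviation of the masses
from the mean mass. -/
noncomputable def deviation {G : SimpleGraph V} (f : V → ℝ) {N : ℕ}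
    (P : Partition G N) : ℝ :=
  Real.sqrt (∑ k : Fin N, (mass f (P.part k) - totalMass f / (N : ℝ)) ^ 2)

/-- The energy functional `F_λ`. -/
noncomputable def energy (G : SimpleGraph V) (f : V → ℝ) (g : Sym2 V → ℝ)
    (lam : ℝ) {N : ℕ} (P : Partition G N) : ℝ :=
  lam * cutEnergy G g P + (1 - lam) * deviation f P

end Districting

namespace Districting

/-- The `p`-deviation energy (`p`-th central moment) of a partition, `p ∈ [1,∞)`. -/
noncomputable def pDeviation {V : Type*} [Fintype V] [DecidableEq V]
    {G : SimpleGraph V} (f : V → ℝ) (p : ℝ) {N : ℕ} (P : Partition G N) : ℝ :=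
  (∑ k : Fin N, |mass f (P.part k) - totalMass f / (N : ℝ)| ^ p) ^ (1 / p)

/-- The `∞`-deviation energy of a partition. -/
noncomputable def infDeviation {V : Type*} [Fintype V] [DecidableEq V]
    {G : SimpleGraph V} (f : V → ℝ) {N : ℕ} (P : Partition G N) : ℝ :=
  ⨆ k : Fin N, |mass f (P.part k) - totalMass f / (N : ℝ)|

/-- The energy functional `F_{λ,p}` with `p`-deviation penalization. -/
noncomputable def energyP {V : Type*} [Fintype V] [DecidableEq V]
    (G : SimpleGraph V) (f : V → ℝ) (g : Sym2 V → ℝ)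
    (lam p : ℝ) {N : ℕ} (P : Partition G N) : ℝ :=
  lam * cutEnergy G g P + (1 - lam) * pDeviation f p P

/-- The energy functional `F_{λ,∞}` with `∞`-deviation penalization. -/
noncomputable def energyInf {V : Type*} [Fintype V] [DecidableEq V]
    (G : SimpleGraph V) (f : V → ℝ) (g : Sym2 V → ℝ)
    (lam : ℝ) {N : ℕ} (P : Partition G N) : ℝ :=
  lam * cutEnergy G g P + (1 - lam) * infDeviation f P

end Districting

namespace Districting

/-- `Q` is a `j`-refining of `P`: up to relabelling, `Q` splits each part of `P`
into exactly `j` parts. -/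
def IsRefining {V : Type*} [Fintype V] [DecidableEq V]
    {G : SimpleGraph V} {M N : ℕ} (j : ℕ)
    (Q : Partition G M) (P : Partition G N) : Prop :=
  ∃ φ : Fin M → Fin N,
    (∀ i, Q.part i ⊆ P.part (φ i)) ∧
      ∀ k, (Finset.univ.filter (fun i => φ i = k)).card = j

end Districting

namespace Districting

/-- The 8-cycle with vertexes `b₁ = 0`, `b₂ = 1`, `b₃ = 2`, `b₄ = 3`, `t₄ = 4`,
`t₃ = 5`, `t₂ = 6`, `t₁ = 7` in cyclic order. -/
def cycleGraph8 : SimpleGraph (Fin 8) :=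
  SimpleGraph.fromRel (fun u v => v = u + 1)

/-- The vertex partition of the `4`-partition `D`. -/
def rangeD : Set (Finset (Fin 8)) :=
  {({7, 0} : Finset (Fin 8)), ({1, 2} : Finset (Fin 8)),
    ({3, 4} : Finset (Fin 8)), ({5, 6} : Finset (Fin 8))}

/-- The vertex partition of the `4`-partition `C`. -/
def rangeC : Set (Finset (Fin 8)) :=
  {({7} : Finset (Fin 8)), ({0, 1, 2, 3} : Finset (Fin 8)),
    ({4} : Finset (Fin 8)), ({5, 6} : Finset (Fin 8))}

/-- The vertex partition of the bottom/top `2`-partition. -/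
def rangeBT : Set (Finset (Fin 8)) :=
  {({0, 1, 2, 3} : Finset (Fin 8)), ({4, 5, 6, 7} : Finset (Fin 8))}

/-- The four possible vertex partitions of a `4`-partition `I` whose cut set
consists of the two weight-`1` edges, one weight-`2` edge and one
weight-`4α` edge. -/
def isTypeI (I : Partition cycleGraph8 4) : Prop :=
  Set.range I.part
      = ({({0} : Finset (Fin 8)), ({1, 2, 3} : Finset (Fin 8)),
          ({4} : Finset (Fin 8)), ({5, 6, 7} : Finset (Fin 8))} :
          Set (Finset (Fin 8))) ∨
    Set.range I.part
      = ({({0} : Finset (Fin 8)), ({1, 2, 3} : Finset (Fin 8)),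
          ({4, 5, 6} : Finset (Fin 8)), ({7} : Finset (Fin 8))} :
          Set (Finset (Fin 8))) ∨
    Set.range I.part
      = ({({0, 1, 2} : Finset (Fin 8)), ({3} : Finset (Fin 8)),
          ({4} : Finset (Fin 8)), ({5, 6, 7} : Finset (Fin 8))} :
          Set (Finset (Fin 8))) ∨
    Set.range I.part
      = ({({0, 1, 2} : Finset (Fin 8)), ({3} : Finset (Fin 8)),
          ({4, 5, 6} : Finset (Fin 8)), ({7} : Finset (Fin 8))} :
          Set (Finset (Fin 8)))

set_option maxRecDepth 100000

instance : DecidableRel cycleGraph8.Adj := fun a b =>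
  decidable_of_iff _ (SimpleGraph.fromRel_adj _ a b).symm

instance {s : Set (Fin 8)} : DecidableRel (cycleGraph8.induce s).Adj :=
  fun u v => inferInstanceAs (Decidable (cycleGraph8.Adj u.val v.val))

lemma conn_aux (s : Finset (Fin 8))
    (h1 : (cycleGraph8.induce (↑s : Set (Fin 8))).Preconnected)
    (h2 : s.Nonempty) : (cycleGraph8.induce (↑s : Set (Fin 8))).Connected := by
  rw [SimpleGraph.connected_iff]
  obtain ⟨x, hx⟩ := h2
  exact ⟨h1, ⟨⟨x, Finset.mem_coe.mpr hx⟩⟩⟩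

/-- The partition `D`. -/
def partD : Partition cycleGraph8 4 where
  part := ![{7,0},{1,2},{3,4},{5,6}]
  disj := by decide
  covers := by decide
  connected := by intro k; fin_cases k <;> exact conn_aux _ (by decide) (by decide)

lemma range_partD : Set.range partD.part
    = ↑({({7,0} : Finset (Fin 8)), {1,2}, {3,4}, {5,6}} : Finset (Finset (Fin 8))) := by
  show Set.range ![_,_,_,_] = _
  simp only [Matrix.range_cons, Matrix.range_cons_empty, Set.singleton_union,
    Finset.coe_insert, Finset.coe_singleton]
  ext x; constructor <;> (intro h; simp at h ⊢; tauto)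

lemma range_partD' : Set.range partD.part = rangeD := by
  rw [range_partD]
  simp only [rangeD, Finset.coe_insert, Finset.coe_singleton]

/-- The partition `C`. -/
def partC : Partition cycleGraph8 4 where
  part := ![{7},{0,1,2,3},{4},{5,6}]
  disj := by decide
  covers := by decide
  connected := by intro k; fin_cases k <;> exact conn_aux _ (by decide) (by decide)

lemma range_partC : Set.range partC.part
    = ↑({({7} : Finset (Fin 8)), {0,1,2,3}, {4}, {5,6}} : Finset (Finset (Fin 8))) := by
  show Set.range ![_,_,_,_] = _
  simp only [Matrix.range_cons, Matrix.range_cons_empty, Set.singleton_union,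
    Finset.coe_insert, Finset.coe_singleton]
  ext x; constructor <;> (intro h; simp at h ⊢; tauto)

lemma range_partC' : Set.range partC.part = rangeC := by
  rw [range_partC]
  simp only [rangeC, Finset.coe_insert, Finset.coe_singleton]

lemma image_eq_of_range {N : ℕ} {P : Partition cycleGraph8 N} {T : Finset (Finset (Fin 8))}
    (h : Set.range P.part = ↑T) : Finset.image P.part Finset.univ = T := by
  apply Finset.coe_injective
  rw [Finset.coe_image, Finset.coe_univ, Set.image_univ, h]

lemma sum_parts {N : ℕ} {P : Partition cycleGraph8 N} {T : Finset (Finset (Fin 8))}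
    (h : Set.range P.part = ↑T) (hc : T.card = N) (F : Finset (Fin 8) → ℝ) :
    ∑ k : Fin N, F (P.part k) = ∑ s ∈ T, F s := by
  have himg := image_eq_of_range h
  have hinj : Set.InjOn P.part ↑(Finset.univ : Finset (Fin N)) :=
    Finset.injOn_of_card_image_eq (by rw [himg, hc, Finset.card_univ, Fintype.card_fin])
  rw [← himg, Finset.sum_image (fun x _ y _ hxy => hinj (by simp) (by simp) hxy)]

/-- The condition for an edge to be cut, phrased via the set of parts. -/
def cutCond (T : Finset (Finset (Fin 8))) (e : Sym2 (Fin 8)) : Prop :=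
  e ∈ cycleGraph8.edgeSet ∧ ∀ s ∈ T, ¬ ∀ v ∈ e, v ∈ s

instance (T : Finset (Finset (Fin 8))) : DecidablePred (cutCond T) := fun _ =>
  inferInstanceAs (Decidable (_ ∧ _))

lemma cutCond_iff {N : ℕ} {P : Partition cycleGraph8 N} {T : Finset (Finset (Fin 8))}
    (h : Set.range P.part = ↑T) (e : Sym2 (Fin 8)) :
    (e ∈ cycleGraph8.edgeSet ∧ ∀ k, ¬ ∀ v ∈ e, v ∈ P.part k) ↔ cutCond T e := by
  unfold cutCond
  refine and_congr_right fun _ => ⟨fun H s hs => ?_, fun H k => ?_⟩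
  · obtain ⟨k, rfl⟩ : s ∈ Set.range P.part := by rw [h]; exact Finset.mem_coe.mpr hs
    exact H k
  · refine H _ ?_
    rw [← Finset.mem_coe, ← h]
    exact ⟨k, rfl⟩

lemma cut_eval {N : ℕ} (g : Sym2 (Fin 8) → ℝ) (P : Partition cycleGraph8 N)
    {T : Finset (Finset (Fin 8))} (h : Set.range P.part = ↑T) (E : Finset (Sym2 (Fin 8)))
    (hE : ∀ e : Sym2 (Fin 8), e ∉ E → ¬ cutCond T e)
    (hE' : ∀ e ∈ E, cutCond T e) :
    cutEnergy cycleGraph8 g P = ∑ e ∈ E, g e := by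
  unfold cutEnergy
  have h2 : ∑ e ∈ E, (if cutCond T e then g e else 0) = ∑ e ∈ E, g e :=
    Finset.sum_congr rfl (fun e he => if_pos (hE' e he))
  have h3 : ∑ e : Sym2 (Fin 8), (if cutCond T e then g e else 0)
      = ∑ e ∈ E, (if cutCond T e then g e else 0) :=
    (Finset.sum_subset (Finset.subset_univ E) (fun e _ he => if_neg (hE e he))).symm
  rw [← h2, ← h3]
  apply Finset.sum_congr rfl
  intro e _
  rcases Classical.em (cutCond T e) with hc | hc
  · rw [if_pos ((cutCond_iff h e).mpr hc), if_pos hc]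
  · rw [if_neg (fun x => hc ((cutCond_iff h e).mp x)), if_neg hc]

lemma pdev_eval (f : Fin 8 → ℝ) (hf : ∀ v, f v = 1) (p : ℝ)
    {P : Partition cycleGraph8 4} {T : Finset (Finset (Fin 8))}
    (h : Set.range P.part = ↑T) (hc : T.card = 4) :
    pDeviation f p P = (∑ s ∈ T, |(s.card : ℝ) - 2| ^ p) ^ (1/p) := by
  unfold pDeviation
  have key : ∀ k : Fin 4, |mass f (P.part k) - totalMass f / ((4 : ℕ) : ℝ)| ^ p
      = (fun s : Finset (Fin 8) => |(s.card : ℝ) - 2| ^ p) (P.part k) := by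
    intro k
    have hm : mass f (P.part k) = (P.part k).card := by simp [mass, hf]
    have ht : totalMass f = 8 := by simp [totalMass, hf]
    rw [hm, ht]
    norm_num
  congr 1
  rw [Finset.sum_congr rfl (fun k _ => key k)]
  exact sum_parts h hc (fun s => |(s.card : ℝ) - 2| ^ p)

lemma refine_eval (I : Partition cycleGraph8 4) {T : Finset (Finset (Fin 8))}
    (hrange : Set.range I.part = ↑T) (hc : T.card = 4)
    (hsplit : ∀ s ∈ T, ¬ s ⊆ ({0,1,2,3} : Finset (Fin 8)) → s ⊆ ({4,5,6,7} : Finset (Fin 8)))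
    (hbot : (T.filter (fun s => s ⊆ ({0,1,2,3} : Finset (Fin 8)))).card = 2)
    (htop : (T.filter (fun s => ¬ s ⊆ ({0,1,2,3} : Finset (Fin 8)))).card = 2)
    (P : Partition cycleGraph8 2) (hP : Set.range P.part = rangeBT) :
    IsRefining 2 I P := by
  obtain ⟨k₀, hk₀⟩ : ({0,1,2,3} : Finset (Fin 8)) ∈ Set.range P.part := by
    rw [hP]; left; rfl
  obtain ⟨k₁, hk₁⟩ : ({4,5,6,7} : Finset (Fin 8)) ∈ Set.range P.part := by
    rw [hP]; right; rfl
  have hne : k₀ ≠ k₁ := by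
    rintro rfl
    rw [hk₀] at hk₁
    exact (by decide : ({0,1,2,3} : Finset (Fin 8)) ≠ {4,5,6,7}) hk₁
  refine ⟨fun i => if I.part i ⊆ ({0,1,2,3} : Finset (Fin 8)) then k₀ else k₁,
    fun i => ?_, fun k => ?_⟩
  · dsimp only
    by_cases hsub : I.part i ⊆ ({0,1,2,3} : Finset (Fin 8))
    · rw [if_pos hsub, hk₀]; exact hsub
    · rw [if_neg hsub, hk₁]
      refine hsplit _ ?_ hsub
      rw [← Finset.mem_coe, ← hrange]
      exact ⟨i, rfl⟩
  · have himg := image_eq_of_range hrange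
    have hinj : Set.InjOn I.part ↑(Finset.univ : Finset (Fin 4)) :=
      Finset.injOn_of_card_image_eq (by rw [himg, hc, Finset.card_univ, Fintype.card_fin])
    have key : ∀ (q : Finset (Fin 8) → Prop) (_ : DecidablePred q),
        (Finset.univ.filter (fun i => q (I.part i))).card = (T.filter q).card := by
      intro q hq
      rw [← himg, Finset.filter_image]
      exact (Finset.card_image_of_injOn (hinj.mono (by simp))).symm
    have h2 : ∀ a b c : Fin 2, a ≠ b → c = a ∨ c = b := by decide
    rcases h2 k₀ k₁ k hne with rfl | rfl
    · have heq : (Finset.univ.filter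
          (fun i => (if I.part i ⊆ ({0,1,2,3} : Finset (Fin 8)) then k else k₁) = k))
          = Finset.univ.filter (fun i => I.part i ⊆ ({0,1,2,3} : Finset (Fin 8))) := by
        apply Finset.filter_congr
        intro i _
        by_cases hsub : I.part i ⊆ ({0,1,2,3} : Finset (Fin 8)) <;>
          simp [hsub, hne, Ne.symm hne]
      rw [heq]
      exact (key (fun s => s ⊆ ({0,1,2,3} : Finset (Fin 8))) inferInstance).trans hbot
    · have heq : (Finset.univ.filter
          (fun i => (if I.part i ⊆ ({0,1,2,3} : Finset (Fin 8)) then k₀ else k) = k))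
          = Finset.univ.filter (fun i => ¬ I.part i ⊆ ({0,1,2,3} : Finset (Fin 8))) := by
        apply Finset.filter_congr
        intro i _
        by_cases hsub : I.part i ⊆ ({0,1,2,3} : Finset (Fin 8)) <;>
          simp [hsub, hne, Ne.symm hne]
      rw [heq]
      exact (key (fun s => ¬ s ⊆ ({0,1,2,3} : Finset (Fin 8))) inferInstance).trans htop

lemma compare_energies (p : ℝ) (hp : 1 ≤ p) (α : ℝ)
    (hα : α > (1 / 2) * (4 : ℝ) ^ (1 / p) /
        (2 * (4 : ℝ) ^ (1 / p) - ((2 : ℝ) + (2 : ℝ) ^ p) ^ (1 / p)))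
    (lam : ℝ) (h0 : 0 ≤ lam) :
    lam * (4 + 8 * α) + (1 - lam) * 0
        < lam * (4 + 4 * α) + (1 - lam) * (4 : ℝ) ^ (1 / p) ∨
    lam * 6 + (1 - lam) * ((2 : ℝ) + (2 : ℝ) ^ p) ^ (1 / p)
        < lam * (4 + 4 * α) + (1 - lam) * (4 : ℝ) ^ (1 / p) := by
  set A := (4 : ℝ) ^ (1 / p) with hAdef
  set B := ((2 : ℝ) + (2 : ℝ) ^ p) ^ (1 / p) with hBdef
  have hp0 : 0 < p := lt_of_lt_of_le one_pos hp
  have hip : 0 < 1 / p := by positivity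
  have hA : 0 < A := Real.rpow_pos_of_pos (by norm_num) _
  have h2p : (2 : ℝ) ≤ 2 ^ p := by
    calc (2 : ℝ) = 2 ^ (1 : ℝ) := (Real.rpow_one 2).symm
    _ ≤ 2 ^ p := Real.rpow_le_rpow_of_exponent_le (by norm_num) hp
  have hAB : A ≤ B := Real.rpow_le_rpow (by norm_num) (by linarith) hip.le
  have hB2A : B < 2 * A := by
    have hlt : (2 : ℝ) + 2 ^ p < 4 * 2 ^ p := by nlinarith
    have h2 : B < ((4 : ℝ) * 2 ^ p) ^ (1 / p) := Real.rpow_lt_rpow (by positivity) hlt hip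
    have h3 : ((4 : ℝ) * 2 ^ p) ^ (1 / p) = A * 2 := by
      rw [Real.mul_rpow (by norm_num) (by positivity), hAdef]
      congr 1
      rw [← Real.rpow_mul (by norm_num : (0:ℝ) ≤ 2), mul_one_div, div_self hp0.ne',
        Real.rpow_one]
    rw [h3] at h2
    linarith
  have hden : 0 < 2 * A - B := by linarith
  have hkey : 1 / 2 * A < α * (2 * A - B) := by
    rw [gt_iff_lt, div_lt_iff₀ hden] at hα
    linarith
  by_cases hcase : lam * (4 * α) < (1 - lam) * A
  · left; linarith
  · right
    push_neg at hcase
    have hlam : 0 < lam := by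
      rcases lt_or_eq_of_le h0 with h | h
      · exact h
      · exfalso; rw [← h] at hcase; simp at hcase; linarith
    have hmain : A * ((1 - lam) * (B - A)) < A * (lam * (4 * α - 2)) := by
      nlinarith [mul_le_mul_of_nonneg_right hcase (sub_nonneg.mpr hAB),
        mul_lt_mul_of_pos_left hkey hlam]
    have := lt_of_mul_lt_mul_left hmain hA.le
    linarith

lemma pdevI_eval (f : Fin 8 → ℝ) (hf : ∀ v, f v = 1) (p : ℝ)
    {I : Partition cycleGraph8 4} {T : Finset (Finset (Fin 8))}
    (hrange : Set.range I.part = ↑T) (hc : T.card = 4)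
    (h13 : ∀ s ∈ T, s.card = 1 ∨ s.card = 3) :
    pDeviation f p I = (4 : ℝ) ^ (1 / p) := by
  rw [pdev_eval f hf p hrange hc]
  congr 1
  have hone : ∀ s ∈ T, |(s.card : ℝ) - 2| ^ p = 1 := by
    intro s hs
    rcases h13 s hs with h | h <;> rw [h] <;> norm_num
  rw [Finset.sum_congr rfl hone, Finset.sum_const, hc]
  norm_num

lemma main_aux (p : ℝ) (hp : 1 ≤ p)
    (α : ℝ)
    (hα : α > (1 / 2) * (4 : ℝ) ^ (1 / p) /
        (2 * (4 : ℝ) ^ (1 / p) - ((2 : ℝ) + (2 : ℝ) ^ p) ^ (1 / p)))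
    (f : Fin 8 → ℝ) (hf : ∀ v, f v = 1)
    (g : Sym2 (Fin 8) → ℝ)
    (hg₃₄ : g s(3, 4) = 1) (hg₄₅ : g s(4, 5) = 2) (hg₆₇ : g s(6, 7) = 2)
    (hg₇₀ : g s(7, 0) = 1)
    (hgD : g s(0, 1) + g s(2, 3) + g s(4, 5) + g s(6, 7) = 4 + 8 * α)
    (I : Partition cycleGraph8 4) (T : Finset (Finset (Fin 8)))
    (hrange : Set.range I.part = ↑T)
    (hc : T.card = 4)
    (h13 : ∀ s ∈ T, s.card = 1 ∨ s.card = 3)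
    (hsplit : ∀ s ∈ T, ¬ s ⊆ ({0,1,2,3} : Finset (Fin 8)) → s ⊆ ({4,5,6,7} : Finset (Fin 8)))
    (hbot : (T.filter (fun s => s ⊆ ({0,1,2,3} : Finset (Fin 8)))).card = 2)
    (htop : (T.filter (fun s => ¬ s ⊆ ({0,1,2,3} : Finset (Fin 8)))).card = 2)
    (E : Finset (Sym2 (Fin 8)))
    (hE : ∀ e : Sym2 (Fin 8), e ∉ E → ¬ cutCond T e)
    (hE' : ∀ e ∈ E, cutCond T e)
    (hEsum : ∑ e ∈ E, g e = 4 + 4 * α) :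
    (cutEnergy cycleGraph8 g I = 4 + 4 * α ∧
        pDeviation f p I = (4 : ℝ) ^ (1 / p)) ∧
      (∀ P : Partition cycleGraph8 2, Set.range P.part = rangeBT →
        IsRefining 2 I P) ∧
      ∀ lam ∈ Set.Icc (0 : ℝ) 1,
        ∃ R : Partition cycleGraph8 4,
          (Set.range R.part = rangeD ∨ Set.range R.part = rangeC) ∧
            energyP cycleGraph8 f g lam p R
              < energyP cycleGraph8 f g lam p I := by
  have hp0 : 0 < p := lt_of_lt_of_le one_pos hp
  have hcut : cutEnergy cycleGraph8 g I = 4 + 4 * α :=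
    (cut_eval g I hrange E hE hE').trans hEsum
  have hpdev : pDeviation f p I = (4 : ℝ) ^ (1 / p) := pdevI_eval f hf p hrange hc h13
  refine ⟨⟨hcut, hpdev⟩,
    fun P hP => refine_eval I hrange hc hsplit hbot htop P hP, fun lam hlam => ?_⟩
  -- energies of D and C
  have hcutD : cutEnergy cycleGraph8 g partD = 4 + 8 * α := by
    rw [cut_eval g partD range_partD
      ({s(0,1), s(2,3), s(4,5), s(6,7)} : Finset (Sym2 (Fin 8))) (by decide) (by decide)]
    rw [Finset.sum_insert (by decide), Finset.sum_insert (by decide),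
      Finset.sum_insert (by decide), Finset.sum_singleton]
    linarith [hgD]
  have hpdevD : pDeviation f p partD = 0 := by
    rw [pdev_eval f hf p range_partD (by decide)]
    have hz : ∀ s ∈ ({({7,0} : Finset (Fin 8)), {1,2}, {3,4}, {5,6}} :
        Finset (Finset (Fin 8))), |(s.card : ℝ) - 2| ^ p = 0 := by
      intro s hs
      have h2 : s.card = 2 := by revert hs; revert s; decide
      rw [h2]
      norm_num
      exact Real.zero_rpow hp0.ne'
    rw [Finset.sum_eq_zero hz]
    exact Real.zero_rpow (by positivity)
  have hcutC : cutEnergy cycleGraph8 g partC = 6 := by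
    rw [cut_eval g partC range_partC
      ({s(3,4), s(4,5), s(6,7), s(7,0)} : Finset (Sym2 (Fin 8))) (by decide) (by decide)]
    rw [Finset.sum_insert (by decide), Finset.sum_insert (by decide),
      Finset.sum_insert (by decide), Finset.sum_singleton]
    rw [hg₃₄, hg₄₅, hg₆₇, hg₇₀]
    norm_num
  have hpdevC : pDeviation f p partC = ((2 : ℝ) + (2 : ℝ) ^ p) ^ (1 / p) := by
    rw [pdev_eval f hf p range_partC (by decide)]
    rw [Finset.sum_insert (by decide), Finset.sum_insert (by decide),
      Finset.sum_insert (by decide), Finset.sum_singleton]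
    rw [show (({7} : Finset (Fin 8)).card = 1) from by decide,
      show (({0,1,2,3} : Finset (Fin 8)).card = 4) from by decide,
      show (({4} : Finset (Fin 8)).card = 1) from by decide,
      show (({5,6} : Finset (Fin 8)).card = 2) from by decide]
    congr 1
    have e1 : |((1 : ℕ) : ℝ) - 2| ^ p = 1 := by norm_num
    have e2 : |((4 : ℕ) : ℝ) - 2| ^ p = (2 : ℝ) ^ p := by norm_num
    have e3 : |((2 : ℕ) : ℝ) - 2| ^ p = 0 := by
      norm_num
      exact Real.zero_rpow hp0.ne'
    rw [e1, e2, e3]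
    ring
  rcases compare_energies p hp α hα lam hlam.1 with h | h
  · refine ⟨partD, Or.inl range_partD', ?_⟩
    unfold energyP
    rw [hcut, hpdev, hcutD, hpdevD]
    calc lam * (4 + 8 * α) + (1 - lam) * 0
        = lam * (4 + 8 * α) + (1 - lam) * 0 := rfl
      _ < _ := h
  · refine ⟨partC, Or.inr range_partC', ?_⟩
    unfold energyP
    rw [hcut, hpdev, hcutC, hpdevC]
    linarith [h]

/-- Example `ex:cex_p`: on the `α`-weighted 8-cycle, for `p ∈ [1,∞)`
and `α ≥ 1` with `α > (1/2)·4^{1/p}/(2·4^{1/p} − (2+2^p)^{1/p})`, any `4`-partition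
`I` cutting the two weight-`1` edges, one weight-`2` edge and one weight-`4α` edge
(a `2`-refining of the bottom/top `2`-partition, with cut energy `4 + 4α` and
`p`-deviation `4^{1/p}`) is never minimal for `F_{λ,p}`: either `D` or `C` has
strictly smaller energy. -/
theorem cycle8_p_norm_no_refining
    (p : ℝ) (hp : 1 ≤ p)
    (α : ℝ) (hα₁ : 1 ≤ α)
    (hα : α > (1 / 2) * (4 : ℝ) ^ (1 / p) /
        (2 * (4 : ℝ) ^ (1 / p) - ((2 : ℝ) + (2 : ℝ) ^ p) ^ (1 / p)))
    (f : Fin 8 → ℝ) (hf : ∀ v, f v = 1)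
    (g : Sym2 (Fin 8) → ℝ)
    (hg₀₁ : g s(0, 1) = 4 * α) (hg₁₂ : g s(1, 2) = 10 * α)
    (hg₂₃ : g s(2, 3) = 4 * α) (hg₃₄ : g s(3, 4) = 1)
    (hg₄₅ : g s(4, 5) = 2) (hg₅₆ : g s(5, 6) = 10 * α)
    (hg₆₇ : g s(6, 7) = 2) (hg₇₀ : g s(7, 0) = 1) :
    ∀ I : Partition cycleGraph8 4, isTypeI I →
      (cutEnergy cycleGraph8 g I = 4 + 4 * α ∧
          pDeviation f p I = (4 : ℝ) ^ (1 / p)) ∧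
        (∀ P : Partition cycleGraph8 2, Set.range P.part = rangeBT →
          IsRefining 2 I P) ∧
        ∀ lam ∈ Set.Icc (0 : ℝ) 1,
          ∃ R : Partition cycleGraph8 4,
            (Set.range R.part = rangeD ∨ Set.range R.part = rangeC) ∧
              energyP cycleGraph8 f g lam p R
                < energyP cycleGraph8 f g lam p I    := by
  intro I hI
  rcases hI with h | h | h | h
  · refine main_aux p hp α hα f hf g hg₃₄ hg₄₅ hg₆₇ hg₇₀
      (by rw [hg₀₁, hg₂₃, hg₄₅, hg₆₇]; ring) I
      ({({0} : Finset (Fin 8)), {1,2,3}, {4}, {5,6,7}} : Finset (Finset (Fin 8)))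
      (by rw [h]; simp only [Finset.coe_insert, Finset.coe_singleton])
      (by decide) (by decide) (by decide) (by decide) (by decide)
      ({s(0,1), s(3,4), s(4,5), s(7,0)} : Finset (Sym2 (Fin 8)))
      (by decide) (by decide) ?_
    rw [Finset.sum_insert (by decide), Finset.sum_insert (by decide),
      Finset.sum_insert (by decide), Finset.sum_singleton, hg₀₁, hg₃₄, hg₄₅, hg₇₀]
    ring
  · refine main_aux p hp α hα f hf g hg₃₄ hg₄₅ hg₆₇ hg₇₀
      (by rw [hg₀₁, hg₂₃, hg₄₅, hg₆₇]; ring) I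
      ({({0} : Finset (Fin 8)), {1,2,3}, {4,5,6}, {7}} : Finset (Finset (Fin 8)))
      (by rw [h]; simp only [Finset.coe_insert, Finset.coe_singleton])
      (by decide) (by decide) (by decide) (by decide) (by decide)
      ({s(0,1), s(3,4), s(6,7), s(7,0)} : Finset (Sym2 (Fin 8)))
      (by decide) (by decide) ?_
    rw [Finset.sum_insert (by decide), Finset.sum_insert (by decide),
      Finset.sum_insert (by decide), Finset.sum_singleton, hg₀₁, hg₃₄, hg₆₇, hg₇₀]
    ring
  · refine main_aux p hp α hα f hf g hg₃₄ hg₄₅ hg₆₇ hg₇₀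
      (by rw [hg₀₁, hg₂₃, hg₄₅, hg₆₇]; ring) I
      ({({0,1,2} : Finset (Fin 8)), {3}, {4}, {5,6,7}} : Finset (Finset (Fin 8)))
      (by rw [h]; simp only [Finset.coe_insert, Finset.coe_singleton])
      (by decide) (by decide) (by decide) (by decide) (by decide)
      ({s(2,3), s(3,4), s(4,5), s(7,0)} : Finset (Sym2 (Fin 8)))
      (by decide) (by decide) ?_
    rw [Finset.sum_insert (by decide), Finset.sum_insert (by decide),
      Finset.sum_insert (by decide), Finset.sum_singleton, hg₂₃, hg₃₄, hg₄₅, hg₇₀]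
    ring
  · refine main_aux p hp α hα f hf g hg₃₄ hg₄₅ hg₆₇ hg₇₀
      (by rw [hg₀₁, hg₂₃, hg₄₅, hg₆₇]; ring) I
      ({({0,1,2} : Finset (Fin 8)), {3}, {4,5,6}, {7}} : Finset (Finset (Fin 8)))
      (by rw [h]; simp only [Finset.coe_insert, Finset.coe_singleton])
      (by decide) (by decide) (by decide) (by decide) (by decide)
      ({s(2,3), s(3,4), s(6,7), s(7,0)} : Finset (Sym2 (Fin 8)))
      (by decide) (by decide) ?_
    rw [Finset.sum_insert (by decide), Finset.sum_insert (by decide),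
      Finset.sum_insert (by decide), Finset.sum_singleton, hg₂₃, hg₃₄, hg₆₇, hg₇₀]
    ring


end Districting
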